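/- Let d ≥ 1 and C ≥ 1. Let w : Fin C → EuclideanSpace ℝ (Fin d) and b : Fin C → ℝ define logits g(z) c = ⟪w c, z⟫ + b c, and let p(z) = softmax(g(z)). Then for ANY probability measure ν on EuclideanSpace ℝ (Fin d), ∫⁻ ∫⁻ ENNReal.ofReal (−log (∑_c p(x) c * p(y) c)) dν(x) dν(y) ≤ 2 * ∑_c ∫⁻ ENNReal.ofReal (−log (p(x) c)) dν(x), where both sides are Lebesgue integrals of nonnegative measurable functions with values in [0, ∞]. -/

import Mathlib

open MeasureTheory ProbabilityTheory Real
open scoped RealInnerProductSpace BigOperators ENNReal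

/-- The multivariate Gaussian measure `N(μ, S)` on `EuclideanSpace ℝ (Fin d)` with mean `μ` and
positive semidefinite covariance matrix `S`, realized as the pushforward of the standard
Gaussian under the affine map `x ↦ μ + √S x`. -/
noncomputable def multiGaussian {d : ℕ} (μ : EuclideanSpace ℝ (Fin d))
    (S : Matrix (Fin d) (Fin d) ℝ) (hS : S.PosSemidef) :
    Measure (EuclideanSpace ℝ (Fin d)) :=
  (MeasureTheory.Measure.pi fun _ : Fin d => gaussianReal 0 1).map
    (fun x => μ + (EuclideanSpace.equiv (Fin d) ℝ).symm ((hS.1.eigenvectorUnitary.1 * Matrix.diagonal ((RCLike.ofReal : ℝ → ℝ) ∘ (√·) ∘ hS.1.eigenvalues) *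
      (star hS.1.eigenvectorUnitary : Matrix (Fin d) (Fin d) ℝ) : Matrix (Fin d) (Fin d) ℝ).mulVec x))

/-- The quadratic form `aᵀ S a = ∑ p q, a p * S p q * a q`. -/
def quadForm {d : ℕ} (S : Matrix (Fin d) (Fin d) ℝ) (a : EuclideanSpace ℝ (Fin d)) : ℝ :=
  ∑ p, ∑ q, a p * S p q * a q

/-- Softmax of a vector of logits. -/
noncomputable def softmax {C : ℕ} (v : Fin C → ℝ) (c : Fin C) : ℝ :=
  Real.exp (v c) / ∑ c', Real.exp (v c')

/-- A nonnegative scalar multiple of a positive semidefinite matrix is positive semidefinite. -/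
theorem posSemidef_smul {d : ℕ} {S : Matrix (Fin d) (Fin d) ℝ} (hS : S.PosSemidef)
    {c : ℝ} (hc : 0 ≤ c) : (c • S).PosSemidef := by
  refine Matrix.PosSemidef.of_dotProduct_mulVec_nonneg ?_ fun x => ?_
  · unfold Matrix.IsHermitian
    rw [Matrix.conjTranspose_smul, hS.1]
    simp
  · rw [Matrix.smul_mulVec]
    simp only [dotProduct_smul, smul_eq_mul]
    exact mul_nonneg hc (hS.dotProduct_mulVec_nonneg x)



/-- Measure-free intermediate claim in Proposition 1: the double expectation of the explicit
feature augmentation loss -log(p(x)ᵀ p(y)) over two i.i.d. features drawn from ANY probability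
measure ν is at most twice the per-class expected cross-entropy. -/
theorem double_lintegral_efa_le (d C : ℕ) (hd : 1 ≤ d) (hC : 1 ≤ C)
    (w : Fin C → EuclideanSpace ℝ (Fin d)) (b : Fin C → ℝ)
    (g : EuclideanSpace ℝ (Fin d) → Fin C → ℝ)
    (hg : ∀ z c, g z c = ⟪w c, z⟫ + b c)
    (p : EuclideanSpace ℝ (Fin d) → Fin C → ℝ)
    (hp : ∀ z, p z = softmax (g z))
    (ν : Measure (EuclideanSpace ℝ (Fin d))) [IsProbabilityMeasure ν] :
    ∫⁻ y, ∫⁻ x, ENNReal.ofReal (-Real.log (∑ c, p x c * p y c)) ∂ν ∂ν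
      ≤ 2 * ∑ c, ∫⁻ x, ENNReal.ofReal (-Real.log (p x c)) ∂ν := by
  haveI : Nonempty (Fin C) := ⟨⟨0, hC⟩⟩
  set c₀ : Fin C := ⟨0, hC⟩
  -- continuity / measurability
  have hgc : ∀ c, Continuous fun z => g z c := by
    intro c
    simp only [hg]
    exact (continuous_const.inner continuous_id).add continuous_const
  have hpos : ∀ z c, 0 < p z c := by
    intro z c
    rw [hp]
    unfold softmax
    exact div_pos (Real.exp_pos _)
      (Finset.sum_pos (fun c' _ => Real.exp_pos _) Finset.univ_nonempty)
  have hpc : ∀ c, Continuous fun z => p z c := by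
    intro c
    have : (fun z => p z c) =
        fun z => Real.exp (g z c) / ∑ c', Real.exp (g z c') := by
      funext z; rw [hp]; rfl
    rw [this]
    exact (Real.continuous_exp.comp (hgc c)).div
      (continuous_finset_sum _ fun c' _ => Real.continuous_exp.comp (hgc c'))
      (fun z => (Finset.sum_pos (fun c' _ => Real.exp_pos _) Finset.univ_nonempty).ne')
  have hmeas : ∀ c, Measurable fun x => ENNReal.ofReal (-Real.log (p x c)) := by
    intro c
    exact ENNReal.measurable_ofReal.comp
      ((Real.measurable_log.comp (hpc c).measurable).neg)
  -- pointwise bound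
  have hpt : ∀ x y, ENNReal.ofReal (-Real.log (∑ c, p x c * p y c))
      ≤ ENNReal.ofReal (-Real.log (p x c₀)) + ENNReal.ofReal (-Real.log (p y c₀)) := by
    intro x y
    have hle : p x c₀ * p y c₀ ≤ ∑ c, p x c * p y c :=
      Finset.single_le_sum (fun c _ => le_of_lt (mul_pos (hpos x c) (hpos y c)))
        (Finset.mem_univ c₀)
    have hlog : -Real.log (∑ c, p x c * p y c) ≤
        -Real.log (p x c₀) + -Real.log (p y c₀) := by
      have := Real.log_le_log (mul_pos (hpos x c₀) (hpos y c₀)) hle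
      rw [Real.log_mul (hpos x c₀).ne' (hpos y c₀).ne'] at this
      linarith
    exact le_trans (ENNReal.ofReal_le_ofReal hlog) ENNReal.ofReal_add_le
  set A : ℝ≥0∞ := ∫⁻ x, ENNReal.ofReal (-Real.log (p x c₀)) ∂ν with hA
  have hinner : ∀ y, ∫⁻ x, ENNReal.ofReal (-Real.log (∑ c, p x c * p y c)) ∂ν
      ≤ A + ENNReal.ofReal (-Real.log (p y c₀)) := by
    intro y
    calc ∫⁻ x, ENNReal.ofReal (-Real.log (∑ c, p x c * p y c)) ∂ν
        ≤ ∫⁻ x, (ENNReal.ofReal (-Real.log (p x c₀))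
            + ENNReal.ofReal (-Real.log (p y c₀))) ∂ν :=
          lintegral_mono fun x => hpt x y
      _ = A + ENNReal.ofReal (-Real.log (p y c₀)) := by
          rw [lintegral_add_right _ measurable_const, lintegral_const, measure_univ, mul_one]
  have houter : ∫⁻ y, ∫⁻ x, ENNReal.ofReal (-Real.log (∑ c, p x c * p y c)) ∂ν ∂ν
      ≤ 2 * A := by
    calc ∫⁻ y, ∫⁻ x, ENNReal.ofReal (-Real.log (∑ c, p x c * p y c)) ∂ν ∂ν
        ≤ ∫⁻ y, (A + ENNReal.ofReal (-Real.log (p y c₀))) ∂ν := lintegral_mono hinner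
      _ = A + A := by
          rw [lintegral_add_right _ (hmeas c₀), lintegral_const, measure_univ, mul_one]
      _ = 2 * A := (two_mul A).symm
  refine houter.trans (mul_le_mul_right ?_ 2)
  exact Finset.single_le_sum (f := fun c => ∫⁻ x, ENNReal.ofReal (-Real.log (p x c)) ∂ν) (fun c _ => zero_le) (Finset.mem_univ c₀)
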